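/- Let k ≥ 1, α ∈ (0,1]^k, ρ ∈ (0,1]^k with Σ_i ρ_i = 1, and set σ = Σ_{i=1}^k α_i ρ_i. Then inf over ω ∈ ℝ_+^k of inf over τ > 0 of [ σ + Σ_{i=1}^k ρ_i( α_i (ω_i τ)² + (1 − α_i) φ(ω_i τ) ) ] equals Σ_{i=1}^k ρ_i · inf over τ ≥ 0 of [ α_i (1 + τ²) + (1 − α_i) φ(τ) ], where φ(t) = √(2/π) ∫_t^∞ (x − t)² exp(−x²/2) dx. (That is, the optimally weighted recovery threshold decouples into the sum, weighted by ρ_i, of the standard thresholds for sparsity fraction α_i.) -/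
import Mathlib


open MeasureTheory ProbabilityTheory
open scoped Pointwise BigOperators

noncomputable section

/-- `phi t = sqrt(2/pi) * int_t^infty (x-t)^2 exp(-x^2/2) dx`. -/
def phi (t : ℝ) : ℝ :=
  Real.sqrt (2 / Real.pi) * ∫ x in Set.Ioi t, (x - t) ^ 2 * Real.exp (-x ^ 2 / 2)

lemma phi_nonneg (t : ℝ) : 0 ≤ phi t :=
  mul_nonneg (Real.sqrt_nonneg _)
    (integral_nonneg fun x => mul_nonneg (sq_nonneg _) (Real.exp_pos _).le)

theorem optimal_threshold_decouples {k : ℕ} (hk : 0 < k)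
    (α ρ : Fin k → ℝ)
    (hα : ∀ i, 0 < α i ∧ α i ≤ 1) (hρ : ∀ i, 0 < ρ i ∧ ρ i ≤ 1)
    (hsum : ∑ i, ρ i = 1) (σ : ℝ) (hσ : σ = ∑ i, α i * ρ i) :
    (⨅ ω : {ω : Fin k → ℝ // ∀ i, 0 ≤ ω i}, ⨅ τ : {t : ℝ // 0 < t},
        (σ + ∑ i, ρ i * (α i * ((ω : Fin k → ℝ) i * (τ : ℝ)) ^ 2
          + (1 - α i) * phi ((ω : Fin k → ℝ) i * (τ : ℝ)))))
      = ∑ i, ρ i * ⨅ τ : {t : ℝ // 0 ≤ t},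
          (α i * (1 + (τ : ℝ) ^ 2) + (1 - α i) * phi (τ : ℝ)) := by
  -- notation
  have : Nonempty {ω : Fin k → ℝ // ∀ i, 0 ≤ ω i} := ⟨⟨fun _ => 0, fun _ => le_refl 0⟩⟩
  have : Nonempty {t : ℝ // 0 < t} := ⟨⟨1, one_pos⟩⟩
  have : Nonempty {t : ℝ // 0 ≤ t} := ⟨⟨0, le_refl 0⟩⟩
  set f : Fin k → ℝ → ℝ := fun i t => α i * (1 + t ^ 2) + (1 - α i) * phi t with hf
  have hf0 : ∀ i t, 0 ≤ f i t := fun i t =>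
    add_nonneg (mul_nonneg (hα i).1.le (by positivity))
      (mul_nonneg (by linarith [(hα i).2]) (phi_nonneg t))
  have hbdd : ∀ i, BddBelow (Set.range fun τ : {t : ℝ // 0 ≤ t} => f i τ) := by
    intro i
    exact ⟨0, by rintro _ ⟨τ, rfl⟩; exact hf0 i τ⟩
  set m : Fin k → ℝ := fun i => ⨅ τ : {t : ℝ // 0 ≤ t}, f i τ with hm
  have hσ0 : 0 ≤ σ := by
    rw [hσ]
    exact Finset.sum_nonneg fun i _ => mul_nonneg (hα i).1.le (hρ i).1.le
  -- key rewriting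
  have key : ∀ t : Fin k → ℝ,
      σ + ∑ i, ρ i * (α i * (t i) ^ 2 + (1 - α i) * phi (t i)) = ∑ i, ρ i * f i (t i) := by
    intro t
    rw [hσ, ← Finset.sum_add_distrib]
    exact Finset.sum_congr rfl fun i _ => by simp [hf]; ring
  -- lower bounds for the big infimum values
  have hval0 : ∀ (ω : {ω : Fin k → ℝ // ∀ i, 0 ≤ ω i}) (τ : {t : ℝ // 0 < t}),
      σ ≤ σ + ∑ i, ρ i * (α i * ((ω : Fin k → ℝ) i * (τ : ℝ)) ^ 2
          + (1 - α i) * phi ((ω : Fin k → ℝ) i * (τ : ℝ))) := by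
    intro ω τ
    have : 0 ≤ ∑ i, ρ i * (α i * ((ω : Fin k → ℝ) i * (τ : ℝ)) ^ 2
          + (1 - α i) * phi ((ω : Fin k → ℝ) i * (τ : ℝ))) := by
      refine Finset.sum_nonneg fun i _ => mul_nonneg (hρ i).1.le ?_
      exact add_nonneg (mul_nonneg (hα i).1.le (sq_nonneg _))
        (mul_nonneg (by linarith [(hα i).2]) (phi_nonneg _))
    linarith
  have hbddInner : ∀ ω : {ω : Fin k → ℝ // ∀ i, 0 ≤ ω i},
      BddBelow (Set.range fun τ : {t : ℝ // 0 < t} =>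
        σ + ∑ i, ρ i * (α i * ((ω : Fin k → ℝ) i * (τ : ℝ)) ^ 2
          + (1 - α i) * phi ((ω : Fin k → ℝ) i * (τ : ℝ)))) := by
    intro ω
    exact ⟨σ, by rintro _ ⟨τ, rfl⟩; exact hval0 ω τ⟩
  apply le_antisymm
  · -- LHS ≤ RHS via ε argument
    refine le_of_forall_pos_le_add fun ε hε => ?_
    have hex : ∀ i, ∃ τ : {t : ℝ // 0 ≤ t}, f i τ < m i + ε := by
      intro i
      exact exists_lt_of_ciInf_lt (by linarith : m i < m i + ε)
    choose t ht using hex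
    have step1 : (⨅ ω : {ω : Fin k → ℝ // ∀ i, 0 ≤ ω i}, ⨅ τ : {t : ℝ // 0 < t},
        (σ + ∑ i, ρ i * (α i * ((ω : Fin k → ℝ) i * (τ : ℝ)) ^ 2
          + (1 - α i) * phi ((ω : Fin k → ℝ) i * (τ : ℝ)))))
        ≤ σ + ∑ i, ρ i * (α i * ((t i : ℝ) * 1) ^ 2 + (1 - α i) * phi ((t i : ℝ) * 1)) := by
      refine le_trans (ciInf_le ?_ ⟨fun i => (t i : ℝ), fun i => (t i).2⟩) ?_
      · refine ⟨σ, ?_⟩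
        rintro _ ⟨ω, rfl⟩
        exact le_ciInf fun τ => hval0 ω τ
      · exact ciInf_le (hbddInner _) ⟨1, one_pos⟩
    refine step1.trans ?_
    simp only [mul_one]
    rw [key fun i => (t i : ℝ)]
    have : ∑ i, ρ i * f i (t i) ≤ ∑ i, ρ i * (m i + ε) :=
      Finset.sum_le_sum fun i _ => mul_le_mul_of_nonneg_left (ht i).le (hρ i).1.le
    refine this.trans ?_
    have : ∑ i, ρ i * (m i + ε) = (∑ i, ρ i * m i) + ε := by
      simp only [mul_add, Finset.sum_add_distrib, ← Finset.sum_mul, hsum, one_mul]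
    rw [this]
  · -- RHS ≤ LHS
    refine le_ciInf fun ω => le_ciInf fun τ => ?_
    rw [key fun i => (ω : Fin k → ℝ) i * (τ : ℝ)]
    refine Finset.sum_le_sum fun i _ => mul_le_mul_of_nonneg_left ?_ (hρ i).1.le
    exact ciInf_le (hbdd i) ⟨(ω : Fin k → ℝ) i * (τ : ℝ), mul_nonneg (ω.2 i) τ.2.le⟩

end
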